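/- (Theorem 1, part (i): the lifted matrix generates a projection dual.) Let n = N − 1 ≥ 1, let c₂,…,c_N be positive reals (set c₁ = 1), let L* be an n×n real lower triangular matrix, and for w ∈ ℕ let L*_w be the n×N matrix with rows (⌊w l*_{i1}⌋, ⌊w l*_{i2} c₂⌋/c₂, …, ⌊w l*_{ii} c_i⌋/c_i, 1/c_{i+1}, 0, …, 0). Then there exist integers u₂,…,u_N (depending on w) such that the ℤ-span of the rows of L*_w equals the ℤ-span of the rows of the n×N matrix M whose i-th row is (−u_{i+1}, 0, …, 0, 1/c_{i+1}, 0, …, 0), where the entry 1/c_{i+1} is in column i+1. -/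

import Mathlib

noncomputable def uuK (n : ℕ) (c : Fin (n + 1) → ℝ) (L : Matrix (Fin n) (Fin n) ℝ)
    (w : ℕ) (i m : ℕ) : ℤ :=
  if h : i < n ∧ m < i then
    ⌊(w : ℝ) * L ⟨i, h.1⟩ ⟨m + 1, by omega⟩ * c ⟨m + 1, by omega⟩⌋
  else 0

noncomputable def uuT (n : ℕ) (c : Fin (n + 1) → ℝ) (L : Matrix (Fin n) (Fin n) ℝ)
    (w : ℕ) : ℕ → ℕ → ℤ
  | 0 => fun _ => 0
  | i + 1 => fun m =>
      if m = i then
        (if hi : i < n then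
          -⌊(w : ℝ) * L ⟨i, hi⟩ ⟨0, by omega⟩ * c 0⌋
            - ∑ m' ∈ Finset.range i, uuK n c L w i m' * uuT n c L w i m'
        else 0)
      else uuT n c L w i m

noncomputable def uu (n : ℕ) (c : Fin (n + 1) → ℝ) (L : Matrix (Fin n) (Fin n) ℝ)
    (w : ℕ) (i : ℕ) : ℤ := uuT n c L w (i + 1) i

theorem uuT_stable (n : ℕ) (c : Fin (n + 1) → ℝ) (L : Matrix (Fin n) (Fin n) ℝ)
    (w : ℕ) : ∀ i m, m < i → uuT n c L w i m = uu n c L w m := by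
  intro i
  induction i with
  | zero => omega
  | succ i ih =>
    intro m hm
    rcases Nat.lt_succ_iff_lt_or_eq.mp hm with h | h
    · rw [show uuT n c L w (i+1) m = uuT n c L w i m by
        simp [uuT, Nat.ne_of_lt h], ih m h]
    · subst h; rfl

theorem uu_eq (n : ℕ) (c : Fin (n + 1) → ℝ) (L : Matrix (Fin n) (Fin n) ℝ)
    (w : ℕ) (i : ℕ) (hi : i < n) :
    uu n c L w i = -⌊(w : ℝ) * L ⟨i, hi⟩ ⟨0, by omega⟩ * c 0⌋
      - ∑ m' ∈ Finset.range i, uuK n c L w i m' * uu n c L w m' := by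
  show uuT n c L w (i+1) i = _
  rw [uuT]
  simp only
  rw [if_pos trivial, dif_pos hi]
  congr 1
  exact Finset.sum_congr rfl fun m hm => by
    rw [uuT_stable n c L w i m (Finset.mem_range.mp hm)]

noncomputable def MM (n : ℕ) (c : Fin (n + 1) → ℝ) (L : Matrix (Fin n) (Fin n) ℝ)
    (w : ℕ) : Fin n → Fin (n + 1) → ℝ :=
  fun i j => if j = 0 then -((uu n c L w i : ℤ) : ℝ)
    else if (j : ℕ) = (i : ℕ) + 1 then 1 / c j else 0

noncomputable def MM' (n : ℕ) (c : Fin (n + 1) → ℝ) (L : Matrix (Fin n) (Fin n) ℝ)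
    (w : ℕ) : ℕ → Fin (n + 1) → ℝ :=
  fun m => if h : m < n then MM n c L w ⟨m, h⟩ else 0

theorem MM_apply (n : ℕ) (c : Fin (n + 1) → ℝ) (L : Matrix (Fin n) (Fin n) ℝ)
    (w : ℕ) (i : Fin n) (j : Fin (n + 1)) :
    MM n c L w i j = if j = 0 then -((uu n c L w i : ℤ) : ℝ)
      else if (j : ℕ) = (i : ℕ) + 1 then 1 / c j else 0 := rfl

theorem MM'_eq (n : ℕ) (c : Fin (n + 1) → ℝ) (L : Matrix (Fin n) (Fin n) ℝ)
    (w : ℕ) (m : ℕ) (h : m < n) : MM' n c L w m = MM n c L w ⟨m, h⟩ := dif_pos h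

theorem key (n : ℕ) (c : Fin (n + 1) → ℝ) (hc0 : c 0 = 1)
    (L : Matrix (Fin n) (Fin n) ℝ)
    (Lw : ℕ → Matrix (Fin n) (Fin (n + 1)) ℝ)
    (hLw : ∀ (w : ℕ) (i : Fin n) (j : Fin (n + 1)),
      Lw w i j =
        if h : (j : ℕ) ≤ (i : ℕ) then
          (⌊(w : ℝ) * L i ⟨(j : ℕ), lt_of_le_of_lt h i.isLt⟩ * c j⌋ : ℝ) / c j
        else if (j : ℕ) = (i : ℕ) + 1 then 1 / c j else 0)
    (w : ℕ) (i : Fin n) :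
    Lw w i = MM n c L w i + ∑ m ∈ Finset.range (i : ℕ), uuK n c L w i m • MM' n c L w m := by
  funext j
  have hin : (i : ℕ) < n := i.isLt
  simp only [Pi.add_apply, Finset.sum_apply, Pi.smul_apply, zsmul_eq_mul,
    Pi.mul_apply, Pi.intCast_apply]
  rw [hLw]
  by_cases hj0 : (j : ℕ) = 0
  · -- column 0
    have hj : j = 0 := Fin.ext hj0
    subst hj
    rw [dif_pos (show ((0 : Fin (n+1)) : ℕ) ≤ (i : ℕ) from Nat.zero_le _)]
    try simp only [Fin.val_zero]
    have hMi : MM n c L w i 0 = -((uu n c L w (i : ℕ) : ℤ) : ℝ) := by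
      simp [MM_apply]
    have hsum : ∀ m ∈ Finset.range (i : ℕ),
        (uuK n c L w (i : ℕ) m : ℝ) * MM' n c L w m 0
          = -((uuK n c L w (i : ℕ) m : ℝ) * ((uu n c L w m : ℤ) : ℝ)) := by
      intro m hm
      have hmn : m < n := lt_trans (Finset.mem_range.mp hm) hin
      rw [MM'_eq n c L w m hmn]
      have h0 : MM n c L w ⟨m, hmn⟩ 0 = -((uu n c L w m : ℤ) : ℝ) := by
        simp [MM_apply]
      rw [h0]; ring
    rw [Finset.sum_congr rfl hsum, Finset.sum_neg_distrib, hMi]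
    have hz := uu_eq n c L w (i : ℕ) hin
    rw [show (⟨(i : ℕ), hin⟩ : Fin n) = i from rfl] at hz
    rw [hc0, mul_one] at hz
    rw [hc0, div_one, mul_one]
    push_cast [hz]
    ring
  · by_cases hji : (j : ℕ) ≤ (i : ℕ)
    · -- 1 ≤ j ≤ i
      rw [dif_pos hji]
      have hMi : MM n c L w i j = 0 := by
        rw [MM_apply]
        rw [if_neg (by intro h; subst h; exact hj0 rfl), if_neg (by omega)]
      rw [hMi, zero_add]
      have hmem : (j : ℕ) - 1 ∈ Finset.range (i : ℕ) := Finset.mem_range.mpr (by omega)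
      rw [Finset.sum_eq_single_of_mem _ hmem ?side]
      case side =>
        intro b hb hne
        have hbn : b < n := lt_trans (Finset.mem_range.mp hb) hin
        rw [MM'_eq n c L w b hbn, MM_apply]
        rw [if_neg (by intro h; subst h; exact hj0 rfl),
          if_neg (show ¬((j : ℕ) = b + 1) by omega)]
        ring
      · have hj1 : (j : ℕ) - 1 < (i : ℕ) := by omega
        have hj1n : (j : ℕ) - 1 < n := lt_trans hj1 hin
        rw [MM'_eq n c L w _ hj1n, MM_apply]
        rw [if_neg (by intro h; subst h; exact hj0 rfl),
          if_pos (show (j : ℕ) = ((j : ℕ) - 1) + 1 by omega)]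
        have hK : uuK n c L w (i : ℕ) ((j : ℕ) - 1)
            = ⌊(w : ℝ) * L i ⟨(j : ℕ), lt_of_le_of_lt hji i.isLt⟩ * c j⌋ := by
          rw [uuK, dif_pos (⟨hin, hj1⟩ : (i : ℕ) < n ∧ (j : ℕ) - 1 < (i : ℕ))]
          have eL : L ⟨(i : ℕ), hin⟩ ⟨(j : ℕ) - 1 + 1, by omega⟩
              = L i ⟨(j : ℕ), lt_of_le_of_lt hji i.isLt⟩ := by
            congr 1
            exact Fin.ext (show (j : ℕ) - 1 + 1 = (j : ℕ) by omega)
          have eC : c ⟨(j : ℕ) - 1 + 1, by omega⟩ = c j := by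
            congr 1
            exact Fin.ext (show (j : ℕ) - 1 + 1 = (j : ℕ) by omega)
          rw [eL, eC]
        rw [hK, mul_one_div]
    · -- j > i
      rw [dif_neg hji]
      by_cases hje : (j : ℕ) = (i : ℕ) + 1
      · rw [if_pos hje]
        have hMi : MM n c L w i j = 1 / c j := by
          rw [MM_apply, if_neg (by intro h; subst h; exact hj0 rfl), if_pos hje]
        rw [hMi]
        rw [Finset.sum_eq_zero, add_zero]
        intro b hb
        have hbn : b < n := lt_trans (Finset.mem_range.mp hb) hin
        rw [MM'_eq n c L w b hbn, MM_apply]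
        rw [if_neg (by intro h; subst h; exact hj0 rfl),
          if_neg (show ¬((j : ℕ) = b + 1) by have := Finset.mem_range.mp hb; omega)]
        ring
      · rw [if_neg hje]
        have hMi : MM n c L w i j = 0 := by
          rw [MM_apply, if_neg (by intro h; subst h; exact hj0 rfl), if_neg hje]
        rw [hMi]
        rw [Finset.sum_eq_zero, add_zero]
        intro b hb
        have hbn : b < n := lt_trans (Finset.mem_range.mp hb) hin
        rw [MM'_eq n c L w b hbn, MM_apply]
        rw [if_neg (by intro h; subst h; exact hj0 rfl),
          if_neg (show ¬((j : ℕ) = b + 1) by have := Finset.mem_range.mp hb; omega)]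
        ring

/-- Theorem 1(i): for every w, the rows of the lifted matrix L*_w span (over ℤ) the same
additive subgroup of ℝ^N as the rows of a matrix M whose i-th row is
(−u_{i+1}, 0, …, 0, 1/c_{i+1}, 0, …, 0) with 1/c_{i+1} in column i+1, for some
integers u₂,…,u_N depending on w. Here c₁ = 1, c₂,…,c_N > 0, N = n+1, and L*_w has
rows (⌊w l*_{i1}⌋, ⌊w l*_{i2} c₂⌋/c₂, …, ⌊w l*_{ii} c_i⌋/c_i, 1/c_{i+1}, 0, …, 0). -/
theorem stmt_16 (n : ℕ) (hn : 1 ≤ n) (c : Fin (n + 1) → ℝ)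
    (hc : ∀ i, 0 < c i) (hc0 : c 0 = 1)
    (L : Matrix (Fin n) (Fin n) ℝ) (hL : ∀ i j : Fin n, i < j → L i j = 0)
    (Lw : ℕ → Matrix (Fin n) (Fin (n + 1)) ℝ)
    (hLw : ∀ (w : ℕ) (i : Fin n) (j : Fin (n + 1)),
      Lw w i j =
        if h : (j : ℕ) ≤ (i : ℕ) then
          (⌊(w : ℝ) * L i ⟨(j : ℕ), lt_of_le_of_lt h i.isLt⟩ * c j⌋ : ℝ) / c j
        else if (j : ℕ) = (i : ℕ) + 1 then 1 / c j else 0) :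
    ∀ w : ℕ, ∃ u : Fin n → ℤ,
      Submodule.span ℤ (Set.range (Lw w)) =
        Submodule.span ℤ (Set.range fun i : Fin n => (fun j : Fin (n + 1) =>
          if j = 0 then -(u i : ℝ)
          else if (j : ℕ) = (i : ℕ) + 1 then 1 / c j else 0)) := by
  intro w
  refine ⟨fun i => uu n c L w i, ?_⟩
  show Submodule.span ℤ (Set.range (Lw w)) = Submodule.span ℤ (Set.range (MM n c L w))
  have hkey := key n c hc0 L Lw hLw w
  refine le_antisymm (Submodule.span_le.mpr ?_) (Submodule.span_le.mpr ?_)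
  · rintro _ ⟨i, rfl⟩
    rw [hkey i]
    refine Submodule.add_mem _ (Submodule.subset_span ⟨i, rfl⟩)
      (Submodule.sum_mem _ fun m hm => Submodule.smul_mem _ _ ?_)
    have hmn : m < n := lt_trans (Finset.mem_range.mp hm) i.isLt
    rw [MM'_eq n c L w m hmn]
    exact Submodule.subset_span ⟨_, rfl⟩
  · have main : ∀ k : ℕ, ∀ hk : k < n,
        MM n c L w ⟨k, hk⟩ ∈ Submodule.span ℤ (Set.range (Lw w)) := by
      intro k
      induction k using Nat.strong_induction_on with
      | _ k ih =>
        intro hk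
        have hMeq : MM n c L w ⟨k, hk⟩ = Lw w ⟨k, hk⟩
            - ∑ m ∈ Finset.range k, uuK n c L w k m • MM' n c L w m :=
          eq_sub_of_add_eq (hkey ⟨k, hk⟩).symm
        rw [hMeq]
        refine Submodule.sub_mem _ (Submodule.subset_span ⟨_, rfl⟩)
          (Submodule.sum_mem _ fun m hm => Submodule.smul_mem _ _ ?_)
        have hm' : m < k := Finset.mem_range.mp hm
        have hmn : m < n := lt_trans hm' hk
        rw [MM'_eq n c L w m hmn]
        exact ih m hm' hmn
    rintro _ ⟨i, rfl⟩
    exact main i.1 i.isLt
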